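/- Let 0 < ρ₁ < ρ₂, z₀ ∈ ℂ, and D = {z ∈ ℂ : |z − z₀| < ρ₂}. Suppose H(ν, z) is, for each real ν ≥ ν₀ > 0, an analytic function of z on D, and that h_s(z), s = 0, 1, 2, …, are analytic on D ∖ {z₀}. Assume that H possesses the asymptotic expansion H(ν,z) ~ Σ_{s=0}^∞ h_s(z)/ν^s as ν → ∞ uniformly on the annulus ρ₁ < |z − z₀| < ρ₂, i.e. for every n ∈ ℕ there exist C_n > 0 and ν_n ≥ ν₀ such that |H(ν,z) − Σ_{s=0}^{n−1} h_s(z) ν^{−s}| ≤ C_n ν^{−n} for all ν ≥ ν_n and all z with ρ₁ < |z − z₀| < ρ₂. Then z₀ is an ordinary point or a removable singularity of each h_s, so each h_s extends to a function ĥ_s analytic on all of D, and moreover for every r with ρ₁ < r < ρ₂ and every n ∈ ℕ there exist C'_n > 0 and ν'_n such that |H(ν,z) − Σ_{s=0}^{n−1} ĥ_s(z) ν^{−s}| ≤ C'_n ν^{−n} for all ν ≥ ν'_n and all z with |z − z₀| ≤ r; that is, the expansion actually holds throughout D. -/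

import Mathlib

open Metric Set Filter Topology

private lemma maxmod {f : ℂ → ℂ} {z₀ : ℂ} {r ρ₂ C : ℝ} (hr : 0 < r) (hrρ : r < ρ₂)
    (hf : DifferentiableOn ℂ f (Metric.ball z₀ ρ₂))
    (hb : ∀ w : ℂ, ‖w - z₀‖ = r → ‖f w‖ ≤ C) :
    ∀ z : ℂ, ‖z - z₀‖ ≤ r → ‖f z‖ ≤ C := by
  intro z hz
  have hsub : closure (Metric.ball z₀ r) ⊆ Metric.ball z₀ ρ₂ := by
    rw [closure_ball z₀ hr.ne']
    exact Metric.closedBall_subset_ball hrρ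
  refine Complex.norm_le_of_forall_mem_frontier_norm_le Metric.isBounded_ball
    (hf.mono hsub).diffContOnCl (fun w hw => ?_) ?_
  · rw [frontier_ball z₀ hr.ne'] at hw
    exact hb w (by rw [← Complex.dist_eq]; exact hw)
  · rw [closure_ball z₀ hr.ne']
    exact Metric.mem_closedBall.mpr (by rw [Complex.dist_eq]; exact hz)

private lemma slit_pre (z₀ : ℂ) (ρ : ℝ) (hρ : 0 < ρ) (σ : ℝ) (hσ : σ * σ = 1) :
    IsPreconnected {z : ℂ | z ∈ Metric.ball z₀ ρ ∧ ((z - z₀).im ≠ 0 ∨ 0 < σ * (z - z₀).re)} := by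
  have habsσ : |σ| = 1 := by
    rcases mul_self_eq_one_iff.mp hσ with h | h <;> rw [h] <;> norm_num
  set b : ℂ := z₀ + ((σ * (ρ / 2) : ℝ) : ℂ) with hbdef
  have hbmem : b ∈ Metric.ball z₀ ρ := by
    rw [Metric.mem_ball, Complex.dist_eq]
    have : b - z₀ = ((σ * (ρ / 2) : ℝ) : ℂ) := by rw [hbdef]; ring
    rw [this, Complex.norm_real, Real.norm_eq_abs, abs_mul, habsσ, one_mul, abs_of_pos (by linarith)]
    linarith
  apply isPreconnected_of_forall b
  rintro y ⟨hy1, hy2⟩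
  refine ⟨segment ℝ b y, ?_, left_mem_segment ℝ b y, right_mem_segment ℝ b y,
    (convex_segment b y).isPreconnected⟩
  rintro p ⟨a, c, ha, hc, hac, rfl⟩
  have hball : a • b + c • y ∈ Metric.ball z₀ ρ := (convex_ball z₀ ρ) hbmem hy1 ha hc hac
  refine ⟨hball, ?_⟩
  have h1 : ((a : ℂ) + (c : ℂ)) = 1 := by
    rw [← Complex.ofReal_add, hac, Complex.ofReal_one]
  have hp : a • b + c • y - z₀ = (a : ℂ) * (b - z₀) + (c : ℂ) * (y - z₀) := by
    simp only [Complex.real_smul]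
    linear_combination z₀ * h1
  have hbz : b - z₀ = ((σ * (ρ / 2) : ℝ) : ℂ) := by rw [hbdef]; ring
  have hre : (a • b + c • y - z₀).re = a * (σ * (ρ / 2)) + c * (y - z₀).re := by
    rw [hp, hbz]
    simp [Complex.add_re, Complex.mul_re]
  have him : (a • b + c • y - z₀).im = c * (y - z₀).im := by
    rw [hp, hbz]
    simp [Complex.add_im, Complex.mul_im]
  rcases hy2 with himy | hrey
  · by_cases hc0 : c = 0
    · right
      rw [hre]
      have ha1 : a = 1 := by rw [hc0] at hac; linarith
      rw [ha1, hc0]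
      have : σ * (1 * (σ * (ρ / 2)) + 0 * (y - z₀).re) = ρ / 2 := by
        linear_combination (ρ / 2) * hσ
      rw [this]; linarith
    · left
      rw [him]
      exact mul_ne_zero hc0 himy
  · right
    rw [hre]
    have key : σ * (a * (σ * (ρ / 2)) + c * (y - z₀).re)
        = a * (ρ / 2) + c * (σ * (y - z₀).re) := by
      linear_combination (a * (ρ / 2)) * hσ
    rw [key]
    rcases eq_or_lt_of_le ha with ha0 | hapos
    · have hc1 : c = 1 := by linarith
      rw [← ha0, hc1]; simpa using hrey
    · have h2 : 0 < a * (ρ / 2) := mul_pos hapos (by linarith)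
      have h3 : 0 ≤ c * (σ * (y - z₀).re) := mul_nonneg hc hrey.le
      linarith

set_option maxHeartbeats 1000000 in
private lemma punctured_ball_preconnected (z₀ : ℂ) (ρ : ℝ) (hρ : 0 < ρ) :
    IsPreconnected (Metric.ball z₀ ρ \ {z₀}) := by
  have e : Metric.ball z₀ ρ \ {z₀}
      = {z : ℂ | z ∈ Metric.ball z₀ ρ ∧ ((z - z₀).im ≠ 0 ∨ 0 < (-1 : ℝ) * (z - z₀).re)}
        ∪ {z : ℂ | z ∈ Metric.ball z₀ ρ ∧ ((z - z₀).im ≠ 0 ∨ 0 < (1 : ℝ) * (z - z₀).re)} := by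
    ext z
    simp only [mem_diff, mem_singleton_iff, mem_union, mem_setOf_eq]
    constructor
    · rintro ⟨hb, hne⟩
      have hz : (z - z₀).im ≠ 0 ∨ (z - z₀).re ≠ 0 := by
        by_contra hcon
        push_neg at hcon
        apply hne
        have : z - z₀ = 0 := Complex.ext hcon.2 hcon.1
        exact sub_eq_zero.mp this
      rcases hz with him | hre
      · exact Or.inl ⟨hb, Or.inl him⟩
      · rcases hre.lt_or_gt with h | h
        · exact Or.inl ⟨hb, Or.inr (by linarith)⟩
        · exact Or.inr ⟨hb, Or.inr (by linarith)⟩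
    · rintro (⟨hb, hcond⟩ | ⟨hb, hcond⟩) <;>
      · refine ⟨hb, fun hz => ?_⟩
        subst hz
        simp at hcond
  rw [e]
  have hcan : z₀ + (↑(ρ / 2) * Complex.I) - z₀ = ↑(ρ / 2) * Complex.I :=
    add_sub_cancel_left z₀ _
  have hx : z₀ + (↑(ρ / 2) * Complex.I) ∈
      Metric.ball z₀ ρ ∧ ((z₀ + (↑(ρ / 2) * Complex.I) - z₀).im ≠ 0) := by
    constructor
    · rw [Metric.mem_ball, Complex.dist_eq, hcan, norm_mul, Complex.norm_real, Real.norm_eq_abs,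
        Complex.norm_I, mul_one, abs_of_pos (by linarith : (0:ℝ) < ρ / 2)]
      linarith
    · rw [hcan, Complex.mul_im]
      simp only [Complex.ofReal_re, Complex.I_im, Complex.ofReal_im, Complex.I_re]
      intro hcon
      nlinarith
  have hs1 : IsPreconnected
      {z : ℂ | z ∈ Metric.ball z₀ ρ ∧ ((z - z₀).im ≠ 0 ∨ 0 < (-1 : ℝ) * (z - z₀).re)} :=
    slit_pre z₀ ρ hρ (-1) (by norm_num)
  have hs2 : IsPreconnected
      {z : ℂ | z ∈ Metric.ball z₀ ρ ∧ ((z - z₀).im ≠ 0 ∨ 0 < (1 : ℝ) * (z - z₀).re)} :=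
    slit_pre z₀ ρ hρ 1 (by norm_num)
  have hmem1 : (z₀ + (↑(ρ / 2) * Complex.I)) ∈
      {z : ℂ | z ∈ Metric.ball z₀ ρ ∧ ((z - z₀).im ≠ 0 ∨ 0 < (-1 : ℝ) * (z - z₀).re)} :=
    ⟨hx.1, Or.inl hx.2⟩
  have hmem2 : (z₀ + (↑(ρ / 2) * Complex.I)) ∈
      {z : ℂ | z ∈ Metric.ball z₀ ρ ∧ ((z - z₀).im ≠ 0 ∨ 0 < (1 : ℝ) * (z - z₀).re)} :=
    ⟨hx.1, Or.inl hx.2⟩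
  exact IsPreconnected.union _ hmem1 hmem2 hs1 hs2

private lemma step
    (ρ₁ ρ₂ : ℝ) (hρ₁ : 0 < ρ₁) (hρ₁₂ : ρ₁ < ρ₂) (z₀ : ℂ)
    (ν₀ : ℝ) (hν₀ : 0 < ν₀)
    (H : ℝ → ℂ → ℂ) (h : ℕ → ℂ → ℂ)
    (hH : ∀ ν : ℝ, ν₀ ≤ ν → AnalyticOnNhd ℂ (H ν) (Metric.ball z₀ ρ₂))
    (hexp : ∀ n : ℕ, ∃ C : ℝ, 0 < C ∧ ∃ νn : ℝ, ν₀ ≤ νn ∧ ∀ ν : ℝ, νn ≤ ν → ∀ z : ℂ,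
      ρ₁ < ‖z - z₀‖ → ‖z - z₀‖ < ρ₂ →
      ‖H ν z - ∑ s ∈ Finset.range n, h s z / (ν : ℂ) ^ s‖ ≤ C / ν ^ n)
    (n : ℕ)
    (IH : ∀ m, m < n → ∃ g : ℂ → ℂ, AnalyticOnNhd ℂ g (Metric.ball z₀ ρ₂) ∧
      ∀ z : ℂ, ρ₁ < ‖z - z₀‖ → ‖z - z₀‖ < ρ₂ → g z = h m z) :
    ∃ g : ℂ → ℂ, AnalyticOnNhd ℂ g (Metric.ball z₀ ρ₂) ∧
      ∀ z : ℂ, ρ₁ < ‖z - z₀‖ → ‖z - z₀‖ < ρ₂ → g z = h n z := by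
  classical
  set g : ℕ → ℂ → ℂ := fun m => if hm : m < n then (IH m hm).choose else 0 with hgdef
  have hgA : ∀ m, m < n → AnalyticOnNhd ℂ (g m) (Metric.ball z₀ ρ₂) := by
    intro m hm
    rw [hgdef]
    simp only [dif_pos hm]
    exact (IH m hm).choose_spec.1
  have hgE : ∀ m, m < n → ∀ z : ℂ, ρ₁ < ‖z - z₀‖ → ‖z - z₀‖ < ρ₂ →
      g m z = h m z := by
    intro m hm z h1 h2
    rw [hgdef]
    simp only [dif_pos hm]
    exact (IH m hm).choose_spec.2 z h1 h2
  obtain ⟨C, hC, νC, hνC, hbound⟩ := hexp (n + 1)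
  set ν1 : ℝ := max νC 1 with hν1def
  have hν11 : (1 : ℝ) ≤ ν1 := le_max_right _ _
  have hν1C : νC ≤ ν1 := le_max_left _ _
  have hνpos : ∀ k : ℕ, (0 : ℝ) < ν1 + k := fun k => by
    have := Nat.cast_nonneg (α := ℝ) k; linarith
  have hν0k : ∀ k : ℕ, ν₀ ≤ ν1 + k := fun k => by
    have := Nat.cast_nonneg (α := ℝ) k; linarith
  have hνCk : ∀ k : ℕ, νC ≤ ν1 + k := fun k => by
    have := Nat.cast_nonneg (α := ℝ) k; linarith
  set F : ℕ → ℂ → ℂ := fun k z => ((ν1 + k : ℝ) : ℂ) ^ n *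
      (H (ν1 + k) z - ∑ s ∈ Finset.range n, g s z / ((ν1 + k : ℝ) : ℂ) ^ s) with hFdef
  have hFA : ∀ k, AnalyticOnNhd ℂ (F k) (Metric.ball z₀ ρ₂) := by
    intro k
    apply AnalyticOnNhd.mul analyticOnNhd_const
    apply AnalyticOnNhd.sub (hH _ (hν0k k))
    apply Finset.analyticOnNhd_fun_sum
    intro s hs
    exact AnalyticOnNhd.div (hgA s (Finset.mem_range.mp hs)) analyticOnNhd_const
      (fun z _ => pow_ne_zero _ (Complex.ofReal_ne_zero.mpr (hνpos k).ne'))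
  -- key estimate on the annulus
  have hest : ∀ k : ℕ, ∀ z : ℂ, ρ₁ < ‖z - z₀‖ → ‖z - z₀‖ < ρ₂ →
      ‖F k z - h n z‖ ≤ C / (ν1 + k) := by
    intro k z hz1 hz2
    have hνp : (0 : ℝ) < ν1 + k := hνpos k
    have hνne : (((ν1 + k : ℝ)) : ℂ) ≠ 0 := Complex.ofReal_ne_zero.mpr hνp.ne'
    have h1 := hbound (ν1 + k) (hνCk k) z hz1 hz2
    have hsum : ∑ s ∈ Finset.range n, g s z / ((ν1 + k : ℝ) : ℂ) ^ s
        = ∑ s ∈ Finset.range n, h s z / ((ν1 + k : ℝ) : ℂ) ^ s :=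
      Finset.sum_congr rfl fun s hs => by
        rw [hgE s (Finset.mem_range.mp hs) z hz1 hz2]
    have e1 : F k z - h n z = ((ν1 + k : ℝ) : ℂ) ^ n *
        (H (ν1 + k) z - ∑ s ∈ Finset.range (n + 1), h s z / ((ν1 + k : ℝ) : ℂ) ^ s) := by
      have hpow : (((ν1 + k : ℝ)) : ℂ) ^ n ≠ 0 := pow_ne_zero _ hνne
      have hcc : (((ν1 + k : ℝ)) : ℂ) ^ n * (h n z / (((ν1 + k : ℝ)) : ℂ) ^ n) = h n z :=
        mul_div_cancel₀ _ hpow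
      simp only [hFdef, hsum]
      rw [Finset.sum_range_succ]
      push_cast at hcc ⊢
      linear_combination hcc
    have habs : ‖((ν1 + k : ℝ) : ℂ) ^ n‖ = (ν1 + k) ^ n := by
      rw [norm_pow, Complex.norm_real, Real.norm_eq_abs, abs_of_pos hνp]
    calc ‖F k z - h n z‖
        = (ν1 + k) ^ n * ‖H (ν1 + k) z -
            ∑ s ∈ Finset.range (n + 1), h s z / ((ν1 + k : ℝ) : ℂ) ^ s‖ := by
          rw [e1, norm_mul, habs]
      _ ≤ (ν1 + k) ^ n * (C / (ν1 + k) ^ (n + 1)) := by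
          exact mul_le_mul_of_nonneg_left h1 (pow_nonneg hνp.le n)
      _ = C / (ν1 + k) := by
          have h1 : ((ν1 + k : ℝ)) ^ n ≠ 0 := (pow_pos hνp n).ne'
          have h2 : (ν1 + (k:ℝ)) ≠ 0 := hνp.ne'
          rw [pow_succ]
          field_simp
  -- Cauchy-type bound on closed balls via the maximum principle
  have hcauchy : ∀ r' : ℝ, ρ₁ < r' → r' < ρ₂ → ∀ k l : ℕ, ∀ z : ℂ,
      ‖z - z₀‖ ≤ r' → ‖F k z - F l z‖ ≤ C / (ν1 + k) + C / (ν1 + l) := by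
    intro r' hr1 hr2 k l
    apply maxmod (hρ₁.trans hr1) hr2 ((hFA k).sub (hFA l)).differentiableOn
    intro w hw
    have hw1 : ρ₁ < ‖w - z₀‖ := by rw [hw]; exact hr1
    have hw2 : ‖w - z₀‖ < ρ₂ := by rw [hw]; exact hr2
    calc ‖F k w - F l w‖ = ‖(F k w - h n w) - (F l w - h n w)‖ := by congr 1; ring
      _ ≤ ‖F k w - h n w‖ + ‖F l w - h n w‖ := norm_sub_le _ _
      _ ≤ C / (ν1 + k) + C / (ν1 + l) :=
          add_le_add (hest k w hw1 hw2) (hest l w hw1 hw2)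
  have htend0 : Tendsto (fun k : ℕ => C / (ν1 + k)) atTop (𝓝 0) :=
    Tendsto.div_atTop tendsto_const_nhds
      (tendsto_atTop_add_const_left atTop ν1 tendsto_natCast_atTop_atTop)
  -- pointwise limit
  set G : ℂ → ℂ := fun z => limUnder atTop (fun k : ℕ => F k z) with hGdef
  have hconv : ∀ z : ℂ, ‖z - z₀‖ < ρ₂ →
      Tendsto (fun k : ℕ => F k z) atTop (𝓝 (G z)) := by
    intro z hz
    have hm : max ρ₁ (‖z - z₀‖) < ρ₂ := max_lt hρ₁₂ hz
    set r' : ℝ := (max ρ₁ (‖z - z₀‖) + ρ₂) / 2 with hr'def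
    have hr1 : ρ₁ < r' := by
      have := le_max_left ρ₁ (‖z - z₀‖); simp only [hr'def]; linarith
    have hr2 : r' < ρ₂ := by simp only [hr'def]; linarith
    have hzr : ‖z - z₀‖ ≤ r' := by
      have := le_max_right ρ₁ (‖z - z₀‖); simp only [hr'def]; linarith
    have hcs : CauchySeq (fun k : ℕ => F k z) := by
      apply cauchySeq_of_le_tendsto_0 (fun N : ℕ => C / (ν1 + N) + C / (ν1 + N))
      · intro k l N hk hl
        rw [dist_eq_norm]
        have hkk : C / (ν1 + k) ≤ C / (ν1 + N) :=
          div_le_div_of_nonneg_left hC.le (hνpos N)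
            (by have := (Nat.cast_le (α := ℝ)).mpr hk; linarith)
        have hll : C / (ν1 + l) ≤ C / (ν1 + N) :=
          div_le_div_of_nonneg_left hC.le (hνpos N)
            (by have := (Nat.cast_le (α := ℝ)).mpr hl; linarith)
        have := hcauchy r' hr1 hr2 k l z hzr
        linarith
      · have : Tendsto (fun N : ℕ => C / (ν1 + N) + C / (ν1 + N)) atTop (𝓝 (0 + 0)) :=
          htend0.add htend0
        simpa using this
    exact hcs.tendsto_limUnder
  -- uniform bound against the limit
  have hunif : ∀ r' : ℝ, ρ₁ < r' → r' < ρ₂ → ∀ k : ℕ, ∀ z : ℂ,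
      ‖z - z₀‖ ≤ r' → ‖F k z - G z‖ ≤ C / (ν1 + k) := by
    intro r' hr1 hr2 k z hz
    have hzρ : ‖z - z₀‖ < ρ₂ := lt_of_le_of_lt hz hr2
    have h1 : Tendsto (fun l : ℕ => ‖F k z - F l z‖) atTop (𝓝 ‖F k z - G z‖) :=
      (Tendsto.sub tendsto_const_nhds (hconv z hzρ)).norm
    have h2 : Tendsto (fun l : ℕ => C / (ν1 + k) + C / (ν1 + l)) atTop
        (𝓝 (C / (ν1 + k) + 0)) := tendsto_const_nhds.add htend0
    have h3 := le_of_tendsto_of_tendsto' h1 h2 (fun l => hcauchy r' hr1 hr2 k l z hz)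
    rwa [add_zero] at h3
  -- equality with h n on the annulus
  have heq : ∀ z : ℂ, ρ₁ < ‖z - z₀‖ → ‖z - z₀‖ < ρ₂ →
      G z = h n z := by
    intro z h1 h2
    set r' : ℝ := (‖z - z₀‖ + ρ₂) / 2 with hr'def
    have hr1 : ρ₁ < r' := by simp only [hr'def]; linarith
    have hr2 : r' < ρ₂ := by simp only [hr'def]; linarith
    have hzr : ‖z - z₀‖ ≤ r' := by simp only [hr'def]; linarith
    have key : ∀ k : ℕ, ‖G z - h n z‖ ≤ C / (ν1 + k) + C / (ν1 + k) := by
      intro k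
      have e : G z - h n z = (F k z - h n z) - (F k z - G z) := by ring
      calc ‖G z - h n z‖ = ‖(F k z - h n z) - (F k z - G z)‖ := by rw [e]
        _ ≤ ‖F k z - h n z‖ + ‖F k z - G z‖ := norm_sub_le _ _
        _ ≤ C / (ν1 + k) + C / (ν1 + k) :=
            add_le_add (hest k z h1 h2) (hunif r' hr1 hr2 k z hzr)
    have h0 : Tendsto (fun k : ℕ => C / (ν1 + k) + C / (ν1 + k)) atTop (𝓝 (0 + 0)) :=
      htend0.add htend0
    have hle : ‖G z - h n z‖ ≤ 0 + 0 :=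
      le_of_tendsto_of_tendsto' tendsto_const_nhds h0 key
    have : ‖G z - h n z‖ ≤ 0 := by linarith
    have := norm_le_zero_iff.mp this
    exact sub_eq_zero.mp this
  -- analyticity of the limit
  have hGA : AnalyticOnNhd ℂ G (Metric.ball z₀ ρ₂) := by
    have hlocal : TendstoLocallyUniformlyOn F G atTop (Metric.ball z₀ ρ₂) := by
      rw [tendstoLocallyUniformlyOn_iff_forall_isCompact Metric.isOpen_ball]
      intro K hK hKc
      rcases K.eq_empty_or_nonempty with rfl | hne
      · exact tendstoUniformlyOn_empty
      · obtain ⟨w, hwK, hwmax⟩ := hKc.exists_isMaxOn hne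
          ((continuous_norm.comp (continuous_id.sub continuous_const)).continuousOn)
        have hwball : ‖w - z₀‖ < ρ₂ := by
          have := hK hwK
          rw [Metric.mem_ball, Complex.dist_eq] at this
          exact this
        have hm : max ρ₁ (‖w - z₀‖) < ρ₂ := max_lt hρ₁₂ hwball
        set r' : ℝ := (max ρ₁ (‖w - z₀‖) + ρ₂) / 2 with hr'def
        have hr1 : ρ₁ < r' := by
          have := le_max_left ρ₁ (‖w - z₀‖); simp only [hr'def]; linarith
        have hr2 : r' < ρ₂ := by simp only [hr'def]; linarith
        have hKsub : ∀ z ∈ K, ‖z - z₀‖ ≤ r' := by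
          intro z hz
          have h1 : ‖z - z₀‖ ≤ ‖w - z₀‖ := hwmax hz
          have := le_max_right ρ₁ (‖w - z₀‖)
          simp only [hr'def]; linarith
        rw [Metric.tendstoUniformlyOn_iff]
        intro ε hε
        filter_upwards [htend0.eventually (gt_mem_nhds hε)] with k hk z hzK
        calc dist (G z) (F k z) = ‖F k z - G z‖ := by rw [dist_comm, dist_eq_norm]
          _ ≤ C / (ν1 + k) := hunif r' hr1 hr2 k z (hKsub z hzK)
          _ < ε := hk
    have hd : DifferentiableOn ℂ G (Metric.ball z₀ ρ₂) :=
      hlocal.differentiableOn (Eventually.of_forall fun k => (hFA k).differentiableOn)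
        Metric.isOpen_ball
    exact hd.analyticOnNhd Metric.isOpen_ball
  exact ⟨G, hGA, heq⟩

/-- **Theorem (removable singularities of asymptotic expansion coefficients).**
If `H (ν, ·)` is analytic on the disk `D = ball z₀ ρ₂` for each `ν ≥ ν₀`, the coefficients
`h s` are analytic on `D \ {z₀}`, and `H` has the uniform asymptotic expansion
`H(ν,z) ~ Σ h s z / ν^s` on the annulus `ρ₁ < |z - z₀| < ρ₂`, then each `h s` extends
analytically to all of `D` and the expansion holds uniformly on `|z - z₀| ≤ r` for every
`ρ₁ < r < ρ₂`. -/
theorem asymptotic_expansion_removable_singularity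
    (ρ₁ ρ₂ : ℝ) (hρ₁ : 0 < ρ₁) (hρ₁₂ : ρ₁ < ρ₂) (z₀ : ℂ)
    (ν₀ : ℝ) (hν₀ : 0 < ν₀)
    (H : ℝ → ℂ → ℂ) (h : ℕ → ℂ → ℂ)
    (hH : ∀ ν : ℝ, ν₀ ≤ ν → AnalyticOnNhd ℂ (H ν) (Metric.ball z₀ ρ₂))
    (hh : ∀ s : ℕ, AnalyticOnNhd ℂ (h s) (Metric.ball z₀ ρ₂ \ {z₀}))
    (hexp : ∀ n : ℕ, ∃ C : ℝ, 0 < C ∧ ∃ νn : ℝ, ν₀ ≤ νn ∧ ∀ ν : ℝ, νn ≤ ν → ∀ z : ℂ,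
      ρ₁ < ‖z - z₀‖ → ‖z - z₀‖ < ρ₂ →
      ‖H ν z - ∑ s ∈ Finset.range n, h s z / (ν : ℂ) ^ s‖ ≤ C / ν ^ n) :
    ∃ hext : ℕ → ℂ → ℂ,
      (∀ s : ℕ, AnalyticOnNhd ℂ (hext s) (Metric.ball z₀ ρ₂)) ∧
      (∀ s : ℕ, ∀ z ∈ Metric.ball z₀ ρ₂ \ {z₀}, hext s z = h s z) ∧
      (∀ r : ℝ, ρ₁ < r → r < ρ₂ → ∀ n : ℕ, ∃ C : ℝ, 0 < C ∧ ∃ νn : ℝ,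
        ∀ ν : ℝ, νn ≤ ν → ∀ z : ℂ, ‖z - z₀‖ ≤ r →
        ‖H ν z - ∑ s ∈ Finset.range n, hext s z / (ν : ℂ) ^ s‖ ≤ C / ν ^ n) := by
  have P : ∀ n : ℕ, ∃ g : ℂ → ℂ, AnalyticOnNhd ℂ g (Metric.ball z₀ ρ₂) ∧
      ∀ z : ℂ, ρ₁ < ‖z - z₀‖ → ‖z - z₀‖ < ρ₂ → g z = h n z := by
    intro n
    induction n using Nat.strong_induction_on with
    | _ n IH => exact step ρ₁ ρ₂ hρ₁ hρ₁₂ z₀ ν₀ hν₀ H h hH hexp n IH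
  choose hext hA hEq using P
  refine ⟨hext, hA, ?_, ?_⟩
  · -- identity theorem: the extension agrees with h on the punctured disk
    intro s z hz
    have hpre := punctured_ball_preconnected z₀ ρ₂ (hρ₁.trans hρ₁₂)
    set p : ℂ := z₀ + (((ρ₁ + ρ₂) / 2 : ℝ) : ℂ) with hpdef
    have hpd : ‖p - z₀‖ = (ρ₁ + ρ₂) / 2 := by
      have : p - z₀ = (((ρ₁ + ρ₂) / 2 : ℝ) : ℂ) := by rw [hpdef]; ring
      rw [this, Complex.norm_real, Real.norm_eq_abs, abs_of_pos (by linarith)]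
    have hp1 : ρ₁ < ‖p - z₀‖ := by rw [hpd]; linarith
    have hp2 : ‖p - z₀‖ < ρ₂ := by rw [hpd]; linarith
    have hpball : p ∈ Metric.ball z₀ ρ₂ \ {z₀} := by
      constructor
      · rw [Metric.mem_ball, Complex.dist_eq, hpd]; linarith
      · intro hps
        rw [mem_singleton_iff] at hps
        rw [hps] at hp1
        simp at hp1
        linarith
    have hopen : IsOpen {w : ℂ | ρ₁ < ‖w - z₀‖ ∧ ‖w - z₀‖ < ρ₂} := by
      have habs : Continuous fun w : ℂ => ‖w - z₀‖ :=
        continuous_norm.comp (continuous_id.sub continuous_const)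
      exact (isOpen_lt continuous_const habs).inter (isOpen_lt habs continuous_const)
    have hev : hext s =ᶠ[𝓝 p] h s := by
      filter_upwards [hopen.mem_nhds ⟨hp1, hp2⟩] with w hw using hEq s w hw.1 hw.2
    exact AnalyticOnNhd.eqOn_of_preconnected_of_eventuallyEq
      ((hA s).mono diff_subset) (hh s) hpre hpball hev hz
  · -- the expansion extends to the full disk by the maximum principle
    intro r hr1 hr2 n
    obtain ⟨C, hC, νC, hνC, hbound⟩ := hexp n
    refine ⟨C, hC, νC, fun ν hν z hz => ?_⟩
    have hνpos : (0 : ℝ) < ν := lt_of_lt_of_le hν₀ (le_trans hνC hν)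
    have hνν₀ : ν₀ ≤ ν := le_trans hνC hν
    set r' : ℝ := (r + ρ₂) / 2 with hr'def
    have hr'0 : 0 < r' := by simp only [hr'def]; linarith
    have hr'1 : ρ₁ < r' := by simp only [hr'def]; linarith
    have hr'2 : r' < ρ₂ := by simp only [hr'def]; linarith
    have hdiff : DifferentiableOn ℂ
        (fun w => H ν w - ∑ s ∈ Finset.range n, hext s w / (ν : ℂ) ^ s)
        (Metric.ball z₀ ρ₂) := by
      apply AnalyticOnNhd.differentiableOn
      apply AnalyticOnNhd.sub (hH ν hνν₀)
      apply Finset.analyticOnNhd_fun_sum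
      intro s _
      exact AnalyticOnNhd.div (hA s) analyticOnNhd_const
        (fun w _ => pow_ne_zero _ (Complex.ofReal_ne_zero.mpr hνpos.ne'))
    have hfr : ∀ w : ℂ, ‖w - z₀‖ = r' →
        ‖H ν w - ∑ s ∈ Finset.range n, hext s w / (ν : ℂ) ^ s‖ ≤ C / ν ^ n := by
      intro w hw
      have hw1 : ρ₁ < ‖w - z₀‖ := by rw [hw]; exact hr'1
      have hw2 : ‖w - z₀‖ < ρ₂ := by rw [hw]; exact hr'2
      have hsum : ∑ s ∈ Finset.range n, hext s w / (ν : ℂ) ^ s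
          = ∑ s ∈ Finset.range n, h s w / (ν : ℂ) ^ s :=
        Finset.sum_congr rfl fun s _ => by rw [hEq s w hw1 hw2]
      rw [hsum]
      exact hbound ν hν w hw1 hw2
    have := maxmod hr'0 hr'2 hdiff hfr z (le_trans hz (by simp only [hr'def]; linarith))
    exact this
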